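/- Let n be a positive integer and let v : S¹ → U(n) be any continuous map into the unitary group of n×n complex matrices. Then for every unitary u ∈ U(n), there exists ζ ∈ S¹ such that ‖v(ζ) u v(ζ)* − ζ·u‖ ≥ 2. -/

import Mathlib

open scoped Matrix.Norms.L2Operator

lemma tele_prod {f : ℕ → ℂ} (hf : ∀ k, f k ≠ 0) (N : ℕ) :
    ∏ k ∈ Finset.range N, (f (k + 1) / f k) = f N / f 0 := by
  induction N with
  | zero => simp [div_self (hf 0)]
  | succ N ih =>
    rw [Finset.prod_range_succ, ih]
    rw [div_mul_div_comm, mul_comm (f N)]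
    rw [mul_div_mul_right _ _ (hf N)]

lemma const_of_exp_eq_one {f : ℝ → ℂ} {s : Set ℝ} (hs : IsPreconnected s)
    (hf : ContinuousOn f s) (h1 : ∀ x ∈ s, Complex.exp (f x) = 1)
    {a b : ℝ} (ha : a ∈ s) (hb : b ∈ s) : f a = f b := by
  haveI : PreconnectedSpace s := Subtype.preconnectedSpace hs
  set g : s → ℂ := fun x => f x with hg
  have hgc : Continuous g := hf.restrict
  have hval : ∀ x : s, ∃ k : ℤ, g x = k * (2 * Real.pi * Complex.I) := by
    intro x
    exact Complex.exp_eq_one_iff.mp (h1 x x.2)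
  have hlc : IsLocallyConstant g := by
    rw [IsLocallyConstant.iff_eventually_eq]
    intro x
    have h2pi : (0 : ℝ) < 2 * Real.pi := by positivity
    have hev : ∀ᶠ y in nhds x, dist (g y) (g x) < 2 * Real.pi := by
      have := hgc.tendsto x
      exact this (Metric.ball_mem_nhds _ h2pi)
    filter_upwards [hev] with y hy
    obtain ⟨ky, hky⟩ := hval y
    obtain ⟨kx, hkx⟩ := hval x
    set j : ℤ := ky - kx with hj
    rw [hky, hkx]
    rw [hky, hkx, Complex.dist_eq] at hy
    have : (ky : ℂ) * (2 * Real.pi * Complex.I) - kx * (2 * Real.pi * Complex.I)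
        = (j : ℂ) * ((2 : ℂ) * (Real.pi : ℂ) * Complex.I) := by rw [hj]; push_cast; ring
    rw [this] at hy
    have habs : |(j : ℝ)| * (2 * Real.pi) < 2 * Real.pi := by
      have := hy
      rw [norm_mul, norm_mul, norm_mul, Complex.norm_intCast, Complex.norm_I, Complex.norm_real,
        Complex.norm_two, Real.norm_eq_abs, abs_of_pos Real.pi_pos, mul_one] at this
      linarith [this]
    have hlt : |(j : ℝ)| < 1 := by
      by_contra hcon
      push_neg at hcon
      nlinarith [Real.pi_pos]
    rw [← Int.cast_abs] at hlt
    have hj1 : |j| < 1 := by exact_mod_cast hlt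
    have : ky = kx := by rw [abs_lt] at hj1; omega
    rw [this]
  exact hlc.apply_eq_of_preconnectedSpace ⟨a, ha⟩ ⟨b, hb⟩

lemma aux_isUnit {n : ℕ} (hn : 0 < n) {a : Matrix (Fin n) (Fin n) ℂ}
    (ha : a ∈ unitary (Matrix (Fin n) (Fin n) ℂ)) (hnorm : ‖a - 1‖ < 2)
    {t : ℝ} (ht : t ∈ Set.Icc (0 : ℝ) 1) :
    IsUnit ((1 - (t : ℂ)) • a + (t : ℂ) • (1 : Matrix (Fin n) (Fin n) ℂ)) := by
  haveI : Nonempty (Fin n) := ⟨⟨0, hn⟩⟩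
  by_cases ht1 : t = 1
  · subst ht1
    simpa using isUnit_one (M := Matrix (Fin n) (Fin n) ℂ)
  have h1t : 0 < 1 - t := lt_of_le_of_ne (by linarith [ht.2]) (fun h => ht1 (by linarith))
  set c : ℂ := 1 - (t : ℂ) with hcdef
  have hc0 : c ≠ 0 := by
    simp only [hcdef, sub_ne_zero]
    intro h
    apply ht1
    have := congrArg Complex.re h
    simpa using this.symm
  set lam : ℂ := ((-(t / (1 - t)) : ℝ) : ℂ) with hlam
  have hclam : c * lam = -(t : ℂ) := by
    rw [hlam, hcdef]
    push_cast
    have : ((1 : ℂ) - t) ≠ 0 := hc0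
    field_simp
  have key : (1 - (t : ℂ)) • a + (t : ℂ) • (1 : Matrix (Fin n) (Fin n) ℂ)
      = c • (a - lam • 1) := by
    rw [smul_sub, smul_smul, hclam, neg_smul, sub_neg_eq_add, hcdef]
  rw [key]
  by_contra hM
  have hsplit : c • (a - lam • (1 : Matrix (Fin n) (Fin n) ℂ))
      = (c • (1 : Matrix (Fin n) (Fin n) ℂ)) * (a - lam • 1) := by
    rw [Matrix.smul_mul, one_mul]
  have hcu : IsUnit (c • (1 : Matrix (Fin n) (Fin n) ℂ)) := by
    refine ⟨⟨c • 1, c⁻¹ • 1, ?_, ?_⟩, rfl⟩ <;>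
      simp [Matrix.smul_mul, smul_smul, mul_inv_cancel₀ hc0, inv_mul_cancel₀ hc0]
  have hnu : ¬ IsUnit (a - lam • (1 : Matrix (Fin n) (Fin n) ℂ)) := fun h => by
    rw [hsplit] at hM; exact hM (hcu.mul h)
  have hspec : lam ∈ spectrum ℂ a := by
    rw [spectrum.mem_iff, Algebra.algebraMap_eq_smul_one]
    intro h
    exact hnu (by simpa [neg_sub] using h.neg)
  have habs : ‖lam‖ = 1 := by
    have := spectrum.subset_circle_of_unitary ha hspec
    simpa using (mem_sphere_zero_iff_norm.mp this)
  have hfrac : t / (1 - t) = 1 := by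
    rw [hlam] at habs
    rw [Complex.norm_real, Real.norm_eq_abs, abs_neg, abs_of_nonneg (div_nonneg ht.1 h1t.le)] at habs
    exact habs
  have ht2 : t = 1 / 2 := by
    field_simp at hfrac
    linarith
  have hlam1 : lam = -1 := by
    rw [hlam, hfrac]
    norm_num
  rw [hlam1] at hspec
  have h2spec : (-2 : ℂ) ∈ spectrum ℂ (a - 1) := by
    rw [spectrum.mem_iff, Algebra.algebraMap_eq_smul_one] at hspec ⊢
    intro h
    apply hspec
    have heq : (-1 : ℂ) • (1 : Matrix (Fin n) (Fin n) ℂ) - a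
        = (-2 : ℂ) • (1 : Matrix (Fin n) (Fin n) ℂ) - (a - 1) := by
      rw [show ((-2 : ℂ)) = (-1) + (-1) by norm_num, add_smul]
      simp only [neg_smul, one_smul]
      abel
    rw [heq]
    exact h
  have : (2 : ℝ) ≤ ‖a - 1‖ := by
    have := spectrum.norm_le_norm_of_mem h2spec
    simpa using this
  linarith

/-- For any continuous map `v : S¹ → U(n)` and any unitary `u ∈ U(n)`,
there exists `ζ ∈ S¹` with `‖v(ζ) u v(ζ)* − ζ·u‖ ≥ 2` (operator norm on matrices). -/
theorem stmt_0 (n : ℕ) (hn : 0 < n)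
    (v : Circle → Matrix.unitaryGroup (Fin n) ℂ) (hv : Continuous v)
    (u : Matrix.unitaryGroup (Fin n) ℂ) :
    ∃ ζ : Circle,
      2 ≤ ‖(v ζ : Matrix (Fin n) (Fin n) ℂ) * (u : Matrix (Fin n) (Fin n) ℂ) *
            star (v ζ : Matrix (Fin n) (Fin n) ℂ) -
            (ζ : ℂ) • (u : Matrix (Fin n) (Fin n) ℂ)‖ := by
  by_contra hcon
  push_neg at hcon
  haveI : Nonempty (Fin n) := ⟨⟨0, hn⟩⟩
  set U : Matrix (Fin n) (Fin n) ℂ := (u : Matrix (Fin n) (Fin n) ℂ) with hU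
  set w : Circle → Matrix (Fin n) (Fin n) ℂ := fun ζ =>
    (starRingEnd ℂ) (ζ : ℂ) • ((v ζ : Matrix (Fin n) (Fin n) ℂ) * U *
      star (v ζ : Matrix (Fin n) (Fin n) ℂ) * star U) with hw
  have hz1 : ∀ ζ : Circle, (starRingEnd ℂ) (ζ : ℂ) * (ζ : ℂ) = 1 := by
    intro ζ
    rw [mul_comm, Complex.mul_conj, Complex.normSq_eq_norm_sq, Circle.norm_coe]
    norm_num
  have hz2 : ∀ ζ : Circle, (ζ : ℂ) * (starRingEnd ℂ) (ζ : ℂ) = 1 := fun ζ => by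
    rw [mul_comm]; exact hz1 ζ
  -- w is unitary
  have hwmem : ∀ ζ, w ζ ∈ unitary (Matrix (Fin n) (Fin n) ℂ) := by
    intro ζ
    have hAmem : (v ζ : Matrix (Fin n) (Fin n) ℂ) * U *
        star (v ζ : Matrix (Fin n) (Fin n) ℂ) * star U ∈ unitary (Matrix (Fin n) (Fin n) ℂ) :=
      mul_mem (mul_mem (mul_mem (v ζ).2 u.2) (Unitary.star_mem (v ζ).2)) (Unitary.star_mem u.2)
    obtain ⟨h1, h2⟩ := Unitary.mem_iff.mp hAmem
    rw [Unitary.mem_iff]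
    constructor
    · rw [hw, star_smul, Matrix.smul_mul, Matrix.mul_smul, smul_smul, h1,
        Complex.star_def, Complex.conj_conj, hz2 ζ, one_smul]
    · rw [hw, star_smul, Matrix.smul_mul, Matrix.mul_smul, smul_smul, h2,
        Complex.star_def, Complex.conj_conj, hz1 ζ, one_smul]
  -- norm bound
  have hwnorm : ∀ ζ, ‖w ζ - 1‖ < 2 := by
    intro ζ
    have hUU : U * star U = 1 := (Unitary.mem_iff.mp u.2).2
    have key : w ζ - 1 = (starRingEnd ℂ) (ζ : ℂ) •
        (((v ζ : Matrix (Fin n) (Fin n) ℂ) * U * star (v ζ : Matrix (Fin n) (Fin n) ℂ)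
          - (ζ : ℂ) • U) * star U) := by
      rw [Matrix.sub_mul, Matrix.smul_mul, hUU, smul_sub, smul_smul, hz1 ζ, one_smul, hw]
    rw [key, norm_smul]
    have hcz : ‖(starRingEnd ℂ) (ζ : ℂ)‖ = 1 := by
      simp [Circle.norm_coe]
    rw [hcz, one_mul,
      CStarRing.norm_mul_mem_unitary _ (Unitary.star_mem u.2)]
    exact hcon ζ
  -- determinant of w
  have hdet : ∀ ζ, (w ζ).det = ((starRingEnd ℂ) (ζ : ℂ)) ^ n := by
    intro ζ
    have hVmul : (v ζ : Matrix (Fin n) (Fin n) ℂ) * star (v ζ : Matrix (Fin n) (Fin n) ℂ) = 1 :=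
      (Unitary.mem_iff.mp (v ζ).2).2
    have hUmul : U * star U = 1 := (Unitary.mem_iff.mp u.2).2
    have hdV : ((v ζ : Matrix (Fin n) (Fin n) ℂ)).det *
        (star (v ζ : Matrix (Fin n) (Fin n) ℂ)).det = 1 := by
      rw [← Matrix.det_mul, hVmul, Matrix.det_one]
    have hdU : U.det * (star U).det = 1 := by
      rw [← Matrix.det_mul, hUmul, Matrix.det_one]
    rw [hw]
    simp only [Matrix.det_smul, Fintype.card_fin, Matrix.det_mul]
    calc ((starRingEnd ℂ) (ζ:ℂ)) ^ n * ((v ζ : Matrix (Fin n) (Fin n) ℂ).det * U.det *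
          (star (v ζ : Matrix (Fin n) (Fin n) ℂ)).det * (star U).det)
        = ((starRingEnd ℂ) (ζ:ℂ)) ^ n * (((v ζ : Matrix (Fin n) (Fin n) ℂ).det *
            (star (v ζ : Matrix (Fin n) (Fin n) ℂ)).det) * (U.det * (star U).det)) := by ring
      _ = ((starRingEnd ℂ) (ζ:ℂ)) ^ n := by rw [hdV, hdU, one_mul, mul_one]
  -- continuity of w
  have hwcont : Continuous w := by
    have hvc : Continuous fun ζ => (v ζ : Matrix (Fin n) (Fin n) ℂ) :=
      continuous_subtype_val.comp hv
    have hcoe : Continuous fun ζ : Circle => (ζ : ℂ) := continuous_subtype_val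
    exact ((Complex.continuous_conj.comp hcoe)).smul
      (((hvc.mul continuous_const).mul hvc.star).mul continuous_const)
  -- the determinant function
  set g : ℝ × ℝ → ℂ := fun p =>
    ((1 - (p.1 : ℂ)) • w (Circle.exp p.2) + (p.1 : ℂ) • 1).det with hg
  have hgc : Continuous g := by
    apply Continuous.matrix_det
    apply Continuous.add
    · exact (continuous_const.sub (Complex.continuous_ofReal.comp continuous_fst)).smul
        (hwcont.comp (Circle.exp.continuous.comp continuous_snd))
    · exact (Complex.continuous_ofReal.comp continuous_fst).smul continuous_const
  have hg0 : ∀ p : ℝ × ℝ, p.1 ∈ Set.Icc (0:ℝ) 1 → g p ≠ 0 := by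
    intro p hp
    have := aux_isUnit hn (hwmem (Circle.exp p.2)) (hwnorm (Circle.exp p.2)) hp
    rw [Matrix.isUnit_iff_isUnit_det] at this
    exact this.ne_zero
  have hper : ∀ t s : ℝ, g (t, s + 2 * Real.pi) = g (t, s) := by
    intro t s
    simp only [hg]
    rw [Circle.periodic_exp s]
  -- g at t = 1
  have hg1 : ∀ s : ℝ, g (1, s) = 1 := by
    intro s
    simp [hg]
  -- g at t = 0
  have hg0' : ∀ s : ℝ, g (0, s) = Complex.exp ((n : ℂ) * (-((s : ℂ) * Complex.I))) := by
    intro s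
    simp only [hg, Complex.ofReal_zero, sub_zero, one_smul, zero_smul, add_zero]
    rw [hdet]
    rw [Circle.coe_exp]
    rw [← Complex.exp_conj]
    rw [Complex.exp_nat_mul]
    congr 1
    simp [map_mul, Complex.conj_ofReal, Complex.conj_I]
  -- compact rectangle, minimum of ‖g‖, uniform continuity
  set K : Set (ℝ × ℝ) := Set.Icc (0:ℝ) 1 ×ˢ Set.Icc (0:ℝ) (2 * Real.pi) with hK
  have hKc : IsCompact K := isCompact_Icc.prod isCompact_Icc
  have hKne : K.Nonempty := ⟨(0, 0), by
    constructor
    · exact ⟨le_refl 0, zero_le_one⟩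
    · exact ⟨le_refl 0, by positivity⟩⟩
  obtain ⟨p₀, hp₀K, hp₀⟩ := hKc.exists_isMinOn hKne (hgc.norm.continuousOn)
  set m : ℝ := ‖g p₀‖ with hm
  have hmpos : 0 < m := by
    rw [hm, norm_pos_iff]
    exact hg0 p₀ hp₀K.1
  have hmle : ∀ p ∈ K, m ≤ ‖g p‖ := fun p hp => hp₀ hp
  have huc := hKc.uniformContinuousOn_of_continuous hgc.continuousOn
  rw [Metric.uniformContinuousOn_iff] at huc
  obtain ⟨δ, hδpos, hδ⟩ := huc m hmpos
  -- choose N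
  obtain ⟨N, hN⟩ := exists_nat_gt (max (2 * Real.pi / δ) (2 * n))
  have h2πδ : 0 < 2 * Real.pi / δ := by positivity
  have hNpos : 0 < (N : ℝ) := h2πδ.trans (lt_of_le_of_lt (le_max_left _ _) hN)
  set Δ : ℝ := 2 * Real.pi / N with hΔ
  have hNne : (N : ℝ) ≠ 0 := hNpos.ne'
  have hΔpos : 0 < Δ := by rw [hΔ]; positivity
  have hNΔ : (N : ℝ) * Δ = 2 * Real.pi := by
    rw [hΔ]; field_simp
  have hΔδ : Δ < δ := by
    rw [hΔ, div_lt_iff₀ hNpos]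
    have h' := lt_of_le_of_lt (le_max_left (2 * Real.pi / δ) (2 * n)) hN
    rw [div_lt_iff₀ hδpos] at h'
    linarith
  have hnΔ : (n : ℝ) * Δ < Real.pi := by
    have h2n : (2 * n : ℝ) < N := lt_of_le_of_lt (le_max_right _ _) hN
    have heq : (n : ℝ) * (2 * Real.pi / N) = 2 * n * Real.pi / N := by ring
    rw [hΔ, heq, div_lt_iff₀ hNpos]
    nlinarith [Real.pi_pos]
  have hnΔpos : 0 < (n : ℝ) * Δ := by
    have : (0 : ℝ) < n := Nat.cast_pos.mpr hn
    positivity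
  -- membership of grid points
  have hkK : ∀ t ∈ Set.Icc (0:ℝ) 1, ∀ k : ℕ, k ≤ N → (t, (k : ℝ) * Δ) ∈ K := by
    intro t ht k hk
    refine ⟨ht, ⟨by positivity, ?_⟩⟩
    calc (k : ℝ) * Δ ≤ (N : ℝ) * Δ :=
          mul_le_mul_of_nonneg_right (Nat.cast_le.mpr hk) hΔpos.le
      _ = 2 * Real.pi := hNΔ
  have hclose : ∀ t ∈ Set.Icc (0:ℝ) 1, ∀ k : ℕ, k < N →
      ‖g (t, ((k : ℝ) + 1) * Δ) - g (t, (k : ℝ) * Δ)‖ < m := by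
    intro t ht k hk
    have h1 : (t, ((k : ℝ) + 1) * Δ) ∈ K := by
      have := hkK t ht (k + 1) hk
      push_cast at this
      exact this
    have h2 : (t, (k : ℝ) * Δ) ∈ K := hkK t ht k hk.le
    have hdist : dist ((t, ((k : ℝ) + 1) * Δ) : ℝ × ℝ) (t, (k : ℝ) * Δ) < δ := by
      rw [Prod.dist_eq]
      have : dist (((k : ℝ) + 1) * Δ) ((k : ℝ) * Δ) = Δ := by
        rw [Real.dist_eq]
        rw [show ((k : ℝ) + 1) * Δ - (k : ℝ) * Δ = Δ by ring]
        exact abs_of_pos hΔpos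
      simp [this, hΔδ, Real.dist_eq]
      linarith
    have := hδ _ h1 _ h2 hdist
    rwa [dist_eq_norm] at this
  -- ratios lie in the slit plane
  have hratio : ∀ t ∈ Set.Icc (0:ℝ) 1, ∀ k : ℕ, k < N →
      g (t, ((k : ℝ) + 1) * Δ) / g (t, (k : ℝ) * Δ) ∈ Complex.slitPlane := by
    intro t ht k hk
    set r : ℂ := g (t, ((k : ℝ) + 1) * Δ) / g (t, (k : ℝ) * Δ) with hr
    have hden : g (t, (k : ℝ) * Δ) ≠ 0 := hg0 _ ht
    have hr1 : ‖r - 1‖ < 1 := by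
      rw [hr, div_sub_one hden, norm_div]
      rw [div_lt_one (norm_pos_iff.mpr hden)]
      exact lt_of_lt_of_le (hclose t ht k hk) (hmle _ (hkK t ht k hk.le))
    rw [Complex.mem_slitPlane_iff]
    left
    have habs := Complex.abs_re_le_norm (r - 1)
    rw [Complex.sub_re, Complex.one_re] at habs
    have : |r.re - 1| < 1 := lt_of_le_of_lt habs hr1
    rw [abs_lt] at this
    linarith [this.1]
  have hratio0 : ∀ t ∈ Set.Icc (0:ℝ) 1, ∀ k : ℕ,
      g (t, ((k : ℝ) + 1) * Δ) / g (t, (k : ℝ) * Δ) ≠ 0 :=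
    fun t ht k => div_ne_zero (hg0 _ ht) (hg0 _ ht)
  -- the winding sum
  set W : ℝ → ℂ := fun t => ∑ k ∈ Finset.range N,
    Complex.log (g (t, ((k : ℝ) + 1) * Δ) / g (t, (k : ℝ) * Δ)) with hW
  have hWcont : ContinuousOn W (Set.Icc (0:ℝ) 1) := by
    apply continuousOn_finset_sum
    intro k hk
    rw [Finset.mem_range] at hk
    apply ContinuousOn.clog
    · apply ContinuousOn.div
      · exact (hgc.comp (continuous_id.prodMk continuous_const)).continuousOn
      · exact (hgc.comp (continuous_id.prodMk continuous_const)).continuousOn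
      · exact fun t ht => hg0 _ ht
    · exact fun t ht => hratio t ht k hk
  have hWexp : ∀ t ∈ Set.Icc (0:ℝ) 1, Complex.exp (W t) = 1 := by
    intro t ht
    rw [hW, Complex.exp_sum]
    have hprod : ∀ k ∈ Finset.range N,
        Complex.exp (Complex.log (g (t, ((k : ℝ) + 1) * Δ) / g (t, (k : ℝ) * Δ)))
          = g (t, ((k : ℝ) + 1) * Δ) / g (t, (k : ℝ) * Δ) :=
      fun k _ => Complex.exp_log (hratio0 t ht k)
    rw [Finset.prod_congr rfl hprod]
    have htele := tele_prod (f := fun k : ℕ => g (t, (k : ℝ) * Δ)) (fun k => hg0 _ ht) N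
    have hcast : ∀ k : ℕ, (((k + 1 : ℕ) : ℝ)) * Δ = ((k : ℝ) + 1) * Δ := by
      intro k; push_cast; ring
    simp only [hcast] at htele
    rw [htele]
    have hgN : g (t, (N : ℝ) * Δ) = g (t, ((0 : ℕ) : ℝ) * Δ) := by
      rw [Nat.cast_zero, hNΔ, show (0:ℝ) * Δ = 0 by ring,
        show (2:ℝ) * Real.pi = 0 + 2 * Real.pi by ring]
      exact hper t 0
    rw [hgN, div_self (hg0 _ ht)]
  -- value at t = 1
  have hW1 : W 1 = 0 := by
    rw [hW]
    apply Finset.sum_eq_zero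
    intro k _
    rw [hg1, hg1, div_one, Complex.log_one]
  -- value at t = 0
  have hW0 : W 0 = (N : ℂ) * (-((n : ℂ) * (Δ : ℝ) * Complex.I)) := by
    simp only [hW]
    have hterm : ∀ k ∈ Finset.range N,
        Complex.log (g (0, ((k : ℝ) + 1) * Δ) / g (0, (k : ℝ) * Δ))
          = -((n : ℂ) * (Δ : ℝ) * Complex.I) := by
      intro k _
      rw [hg0', hg0', ← Complex.exp_sub]
      have hexp : (n : ℂ) * -((((((k : ℝ) + 1) * Δ : ℝ)) : ℂ) * Complex.I)
          - (n : ℂ) * -(((((k : ℝ) * Δ : ℝ)) : ℂ) * Complex.I)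
          = -((n : ℂ) * (Δ : ℝ) * Complex.I) := by
        push_cast
        ring
      rw [hexp]
      apply Complex.log_exp
      · simp only [Complex.neg_im, Complex.mul_im, Complex.mul_re, Complex.natCast_re,
          Complex.ofReal_re, Complex.natCast_im, Complex.ofReal_im, Complex.I_re, Complex.I_im]
        simp only [mul_zero, zero_mul, mul_one, sub_zero, add_zero, zero_add]
        linarith
      · simp only [Complex.neg_im, Complex.mul_im, Complex.mul_re, Complex.natCast_re,
          Complex.ofReal_re, Complex.natCast_im, Complex.ofReal_im, Complex.I_re, Complex.I_im]
        simp only [mul_zero, zero_mul, mul_one, sub_zero, add_zero, zero_add]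
        linarith [Real.pi_pos]
    rw [Finset.sum_congr rfl hterm, Finset.sum_const, Finset.card_range, nsmul_eq_mul]
  -- contradiction
  have heq := const_of_exp_eq_one isPreconnected_Icc hWcont hWexp
    (Set.mem_Icc.mpr ⟨le_refl 0, zero_le_one⟩) (Set.mem_Icc.mpr ⟨zero_le_one, le_refl 1⟩)
  rw [hW0, hW1] at heq
  have hne : (N : ℂ) * (-((n : ℂ) * (Δ : ℝ) * Complex.I)) ≠ 0 := by
    apply mul_ne_zero
    · exact_mod_cast hNpos.ne'
    · rw [neg_ne_zero]
      apply mul_ne_zero (mul_ne_zero ?_ ?_) Complex.I_ne_zero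
      · exact_mod_cast hn.ne'
      · exact_mod_cast hΔpos.ne'
  exact hne heq
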